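/- Let W be symmetric and D diagonal positive definite such that the pencil (W,D) has at least K positive eigenvalues and a nonzero eigengap between the K-th and (K+1)-th eigenvalues. If a stationary point Y₀ of f(Y) = trace(-2Yᵀ(W/n)Y + Yᵀ(D/n)YYᵀ(D/n)Y) satisfies Y₀ᵀDUᵢ = 0 for some eigenvector Uᵢ of (W,D) with index i ≤ K (i.e., Y₀ omits a leading eigenvector), then Y₀ is a strict saddle point: there exists a direction S₀ with Sᵀ∇²f(Y₀)S < 0. -/

import Mathlib

open Matrix

private lemma aux_sandwich {n K : ℕ} (X : Matrix (Fin n) (Fin n) ℝ)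
    (u u' : Fin n → ℝ) (c c' : Fin K → ℝ) :
    (vecMulVec u c)ᵀ * X * vecMulVec u' c'
      = (u ⬝ᵥ (X *ᵥ u')) • vecMulVec c c' := by
  ext k l
  simp only [mul_apply, vecMulVec_apply, transpose_apply, Matrix.smul_apply, dotProduct, mulVec,
    smul_eq_mul, Finset.sum_mul, Finset.mul_sum]
  rw [Finset.sum_comm]
  refine Finset.sum_congr rfl fun s _ => Finset.sum_congr rfl fun r _ => by ring

private lemma aux_trace_vvv {K : ℕ} (c c' : Fin K → ℝ) :
    trace (vecMulVec c c') = c ⬝ᵥ c' := by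
  simp [trace, diag, vecMulVec_apply, dotProduct]

private lemma aux_trace_vvv_mul {K : ℕ} (c d : Fin K → ℝ) (M : Matrix (Fin K) (Fin K) ℝ) :
    trace (vecMulVec c d * M) = d ⬝ᵥ (M *ᵥ c) := by
  simp only [trace, diag_apply, mul_apply, vecMulVec_apply, dotProduct, mulVec, Finset.mul_sum]
  rw [Finset.sum_comm]
  refine Finset.sum_congr rfl fun s _ => Finset.sum_congr rfl fun r _ => by ring

private lemma aux_vvv_transpose {n K : ℕ} (u : Fin n → ℝ) (c : Fin K → ℝ) :
    (vecMulVec u c)ᵀ = vecMulVec c u := by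
  ext k r; simp [vecMulVec_apply, mul_comm]

private lemma aux_vvv_mul {m n K : ℕ} (c : Fin K → ℝ) (w : Fin m → ℝ)
    (A : Matrix (Fin m) (Fin n) ℝ) :
    vecMulVec c w * A = vecMulVec c (w ᵥ* A) := by
  ext k l
  simp only [mul_apply, vecMulVec_apply, vecMul, dotProduct, Finset.mul_sum]
  exact Finset.sum_congr rfl fun r _ => by ring

/-- A stationary point that omits one of the leading `K` eigenvectors of the
pencil `(W, D)` is a strict saddle point of the orthogonalization-free objective. -/
theorem stmt_1 (n K : ℕ) (hn : 0 < n) (hKn : K < n)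
    (W D : Matrix (Fin n) (Fin n) ℝ) (hW : W.IsSymm) (hDdiag : D.IsDiag)
    (hDpos : D.PosDef)
    (lam : Fin n → ℝ) (Ucol : Fin n → Fin n → ℝ)
    (hEig : ∀ j, W *ᵥ Ucol j = lam j • (D *ᵥ Ucol j))
    (hOrth : ∀ j l, Ucol j ⬝ᵥ (D *ᵥ Ucol l) = if j = l then (n : ℝ) else 0)
    (hsort : ∀ i j : Fin n, i ≤ j → lam j ≤ lam i)
    (hpos : ∀ i : Fin n, (i : ℕ) < K → 0 < lam i)
    (hgap : ∀ i j : Fin n, (i : ℕ) < K → K ≤ (j : ℕ) → lam j < lam i)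
    (Y₀ : Matrix (Fin n) (Fin K) ℝ)
    (hstat : ((n : ℝ)⁻¹ • W) * Y₀
      = ((n : ℝ)⁻¹ • D) * Y₀ * (Y₀ᵀ * (((n : ℝ)⁻¹ • D)) * Y₀))
    (homit : ∃ i : Fin n, (i : ℕ) < K ∧ Y₀ᵀ *ᵥ (D *ᵥ Ucol i) = 0) :
    ∃ S : Matrix (Fin n) (Fin K) ℝ,
      -4 * trace (Sᵀ * ((n : ℝ)⁻¹ • W) * S)
        + 4 * trace (Sᵀ * ((n : ℝ)⁻¹ • D) * S * (Y₀ᵀ * ((n : ℝ)⁻¹ • D) * Y₀))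
        + 4 * trace (Sᵀ * ((n : ℝ)⁻¹ • D) * Y₀ * (Sᵀ * ((n : ℝ)⁻¹ • D) * Y₀))
        + 4 * trace (Sᵀ * ((n : ℝ)⁻¹ • D) * Y₀ * (Y₀ᵀ * ((n : ℝ)⁻¹ • D) * S)) < 0 := by
  obtain ⟨i, hiK, hzero⟩ := homit
  have hn0 : (n : ℝ) ≠ 0 := Nat.cast_ne_zero.mpr hn.ne'
  set Dn : Matrix (Fin n) (Fin n) ℝ := (n : ℝ)⁻¹ • D with hDn
  set M : Matrix (Fin K) (Fin K) ℝ := Y₀ᵀ * Dn * Y₀ with hM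
  have hDsymm : Dᵀ = D := hDdiag.isSymm
  -- rows of Y₀ in the eigenbasis
  set a : Fin n → Fin K → ℝ := fun j => Y₀ᵀ *ᵥ (Dn *ᵥ Ucol j) with ha
  have hDnsymm : Dnᵀ = Dn := by rw [hDn, Matrix.transpose_smul, hDsymm]
  have hDvm : ∀ x : Fin n → ℝ, x ᵥ* D = D *ᵥ x := by
    intro x
    conv_lhs => rw [← hDsymm]
    exact vecMul_transpose D x
  have hDnvm : ∀ x : Fin n → ℝ, x ᵥ* Dn = Dn *ᵥ x := by
    intro x
    conv_lhs => rw [← hDnsymm]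
    exact vecMul_transpose Dn x
  have hdotpos : ∀ {m : ℕ} (w : Fin m → ℝ), w ≠ 0 → 0 < w ⬝ᵥ w := by
    intro m w hw
    have hnn : 0 ≤ w ⬝ᵥ w := Finset.sum_nonneg fun r _ => mul_self_nonneg (w r)
    rcases lt_or_eq_of_le hnn with h | h
    · exact h
    · exact absurd (dotProduct_self_eq_zero.mp h.symm) hw
  have hsym : ∀ x y : Fin n → ℝ, (D *ᵥ x) ⬝ᵥ y = x ⬝ᵥ (D *ᵥ y) := by
    intro x y
    rw [← hDvm x, ← dotProduct_mulVec]
  have hai : a i = 0 := by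
    simp only [ha, hDn, smul_mulVec, mulVec_smul, hzero, smul_zero]
  -- M is symmetric
  have hMsymm : Mᵀ = M := by
    simp only [hM, transpose_mul, transpose_transpose, hDnsymm, Matrix.mul_assoc]
  -- transposed stationarity: M * Y₀ᵀ * Dn = Y₀ᵀ * ((n:ℝ)⁻¹ • W)
  have htr : M * Y₀ᵀ * Dn = Y₀ᵀ * ((n : ℝ)⁻¹ • W) := by
    have := congrArg Matrix.transpose hstat
    simp only [transpose_mul, transpose_transpose, Matrix.transpose_smul, hDsymm, hW.eq,
      hDnsymm, hMsymm] at this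
    simp only [Matrix.mul_assoc] at this ⊢
    exact this.symm
  -- each row of `a` is an eigenvector of M
  have heig : ∀ j, M *ᵥ a j = lam j • a j := by
    intro j
    have h1 : M *ᵥ a j = (M * Y₀ᵀ * Dn) *ᵥ Ucol j := by
      simp only [ha, mulVec_mulVec, Matrix.mul_assoc]
    rw [h1, htr, ← mulVec_mulVec]
    rw [show ((n : ℝ)⁻¹ • W) *ᵥ Ucol j = (n : ℝ)⁻¹ • (W *ᵥ Ucol j) from smul_mulVec _ _ _]
    rw [hEig j, ha]
    simp only [hDn, smul_mulVec, mulVec_smul, smul_comm ((n : ℝ)⁻¹) (lam j)]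
  -- key claim: some direction c with cᵀ M c < λᵢ |c|²
  have key : ∃ c : Fin K → ℝ, c ≠ 0 ∧ c ⬝ᵥ (M *ᵥ c) < lam i * (c ⬝ᵥ c) := by
    by_contra hcon
    push_neg at hcon
    have hMlow : ∀ c : Fin K → ℝ, c ≠ 0 → lam i * (c ⬝ᵥ c) ≤ c ⬝ᵥ (M *ᵥ c) := hcon
    -- rows with index ≥ K vanish
    have htail : ∀ j : Fin n, K ≤ (j : ℕ) → a j = 0 := by
      intro j hj
      by_contra haj
      have hpos' : 0 < a j ⬝ᵥ a j := hdotpos (a j) haj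
      have h1 : a j ⬝ᵥ (M *ᵥ a j) = lam j * (a j ⬝ᵥ a j) := by
        rw [heig j, dotProduct_smul, smul_eq_mul]
      have h2 := hMlow (a j) haj
      rw [h1] at h2
      have : lam i ≤ lam j := le_of_mul_le_mul_right h2 hpos'
      exact absurd this (not_le.mpr (hgap i j hiK hj))
    -- the truncated matrix B has a zero row, hence nontrivial kernel
    set B : Matrix (Fin K) (Fin K) ℝ := fun j k => a (Fin.castLE hKn.le j) k with hB
    have hdetB : B.det = 0 := by
      refine det_eq_zero_of_row_eq_zero ⟨i.1, hiK⟩ fun k => ?_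
      have : Fin.castLE hKn.le ⟨i.1, hiK⟩ = i := Fin.ext rfl
      simp [hB, this, hai]
    obtain ⟨c, hc0, hBc⟩ := (Matrix.exists_mulVec_eq_zero_iff).mpr hdetB
    -- all rows of a annihilate c
    have hac : ∀ j : Fin n, a j ⬝ᵥ c = 0 := by
      intro j
      by_cases hj : (j : ℕ) < K
      · have hcast : Fin.castLE hKn.le ⟨j.1, hj⟩ = j := Fin.ext rfl
        have := congrFun hBc ⟨j.1, hj⟩
        simpa [hB, mulVec, hcast] using this
      · simp [htail j (le_of_not_gt hj)]
    -- hence D * (Y₀ c) is D-orthogonal to every eigenvector, so it vanishes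
    set v : Fin n → ℝ := Y₀ *ᵥ c with hv
    have hdv : ∀ j, Ucol j ⬝ᵥ (D *ᵥ v) = 0 := by
      intro j
      have h1 : a j ⬝ᵥ c = (Dn *ᵥ Ucol j) ⬝ᵥ v := by
        simp only [ha, hv]
        rw [show (Y₀ᵀ *ᵥ (Dn *ᵥ Ucol j)) = (Dn *ᵥ Ucol j) ᵥ* Y₀ from mulVec_transpose _ _]
        rw [dotProduct_mulVec]
      have h2 : (Dn *ᵥ Ucol j) ⬝ᵥ v = (n : ℝ)⁻¹ * (Ucol j ⬝ᵥ (D *ᵥ v)) := by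
        rw [hDn, smul_mulVec, smul_dotProduct, smul_eq_mul]
        congr 1
        exact hsym (Ucol j) v
      have := hac j
      rw [h1, h2] at this
      rcases mul_eq_zero.mp this with h | h
      · exact absurd h (inv_ne_zero hn0)
      · exact h
    have hDv : D *ᵥ v = 0 := by
      -- the matrix with rows Ucol j is invertible
      set Ur : Matrix (Fin n) (Fin n) ℝ := Matrix.of Ucol with hUr
      have hinv : Ur * ((n : ℝ)⁻¹ • (D * Urᵀ)) = 1 := by
        have h1 : Ur * (D * Urᵀ) = (n : ℝ) • (1 : Matrix (Fin n) (Fin n) ℝ) := by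
          ext j l
          have := hOrth j l
          simp only [mul_apply, hUr, Matrix.of_apply, transpose_apply, dotProduct, mulVec,
            Finset.mul_sum] at this ⊢
          rw [this]
          by_cases h : j = l <;> simp [h, Matrix.one_apply, Matrix.smul_apply]
        rw [Matrix.mul_smul, h1, smul_smul, inv_mul_cancel₀ hn0, one_smul]
      have hUdet : IsUnit Ur.det := isUnit_det_of_right_inverse hinv
      have hUrv : Ur *ᵥ (D *ᵥ v) = 0 := by
        ext j
        simpa [hUr, mulVec, dotProduct] using hdv j
      calc D *ᵥ v = (Ur⁻¹ * Ur) *ᵥ (D *ᵥ v) := by rw [nonsing_inv_mul _ hUdet, one_mulVec]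
        _ = Ur⁻¹ *ᵥ (Ur *ᵥ (D *ᵥ v)) := by rw [← mulVec_mulVec]
        _ = 0 := by rw [hUrv, mulVec_zero]
    -- so cᵀ M c = 0, contradicting hMlow
    have hMc : c ⬝ᵥ (M *ᵥ c) = 0 := by
      have h1 : M *ᵥ c = Y₀ᵀ *ᵥ (Dn *ᵥ v) := by
        simp only [hM, hv, mulVec_mulVec, Matrix.mul_assoc]
      rw [h1, hDn, smul_mulVec, mulVec_smul, hDv]
      simp
    have hcc : 0 < c ⬝ᵥ c := hdotpos c hc0
    have := hMlow c hc0
    rw [hMc] at this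
    nlinarith [hpos i hiK]
  obtain ⟨c, hc0, hlt⟩ := key
  set u : Fin n → ℝ := Ucol i with hu
  refine ⟨vecMulVec u c, ?_⟩
  set S : Matrix (Fin n) (Fin K) ℝ := vecMulVec u c with hS
  have huDu : u ⬝ᵥ (D *ᵥ u) = (n : ℝ) := by simpa using hOrth i i
  -- first term
  have h1 : trace (Sᵀ * ((n : ℝ)⁻¹ • W) * S) = lam i * (c ⬝ᵥ c) := by
    rw [hS, aux_sandwich, trace_smul, aux_trace_vvv, smul_eq_mul]
    congr 1
    rw [smul_mulVec, hEig i, dotProduct_smul, dotProduct_smul, smul_eq_mul, smul_eq_mul,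
      ← hu, huDu]
    field_simp
  -- second term
  have h2 : trace (Sᵀ * Dn * S * M) = c ⬝ᵥ (M *ᵥ c) := by
    rw [hS, aux_sandwich]
    have : u ⬝ᵥ (Dn *ᵥ u) = 1 := by
      rw [hDn, smul_mulVec, dotProduct_smul, smul_eq_mul, huDu, inv_mul_cancel₀ hn0]
    rw [this, one_smul, aux_trace_vvv_mul]
  -- mixed terms vanish
  have hz : Sᵀ * Dn * Y₀ = 0 := by
    rw [hS, aux_vvv_transpose, aux_vvv_mul, aux_vvv_mul]
    have : (u ᵥ* Dn) ᵥ* Y₀ = 0 := by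
      rw [hDnvm, hDn, smul_mulVec, smul_vecMul, ← mulVec_transpose, hzero, smul_zero]
    rw [this]
    ext k l
    simp [vecMulVec_apply]
  have h3 : trace (Sᵀ * Dn * Y₀ * (Sᵀ * Dn * Y₀)) = 0 := by
    rw [hz, Matrix.zero_mul, trace_zero]
  have h4 : trace (Sᵀ * Dn * Y₀ * (Y₀ᵀ * Dn * S)) = 0 := by
    rw [hz, Matrix.zero_mul, trace_zero]
  rw [h1, h2, h3, h4]
  nlinarith [hlt]
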